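/- The map T sending a continuous curve γ:[0,t_γ]→ℂ to the pair (its equivalence class modulo increasing reparametrization, its occupation measure ν_γ) is Lipschitz continuous with Lipschitz constant at most 2, where the space of curves carries the metric d(γ₁,γ₂)=|t_{γ₁}−t_{γ₂}|+sup_{0≤s≤t_{γ₁}∨t_{γ₂}}|γ₁(s)−γ₂(s)| (curves extended constantly past their endpoint), equivalence classes carry the metric ρ(γ₁,γ₂)=inf_φ sup_s |γ₁(s)−γ₂(φ(s))| over increasing homeomorphisms φ:[0,t_{γ₁}]→[0,t_{γ₂}], and measures carry the Lévy–Prokhorov metric; the product space carries the sum metric. -/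

import Mathlib

open MeasureTheory Metric Set Filter

noncomputable section

/-- A continuous curve in `ℂ` with finite lifetime `T`, extended constantly past its endpoint. -/
structure Curve where
  T : ℝ
  hT : 0 ≤ T
  f : ℝ → ℂ
  cont : Continuous f
  frozen : ∀ s, T ≤ s → f s = f T

/-- The metric `d(γ₁,γ₂) = |t_{γ₁} - t_{γ₂}| + sup_{0 ≤ s ≤ t_{γ₁} ∨ t_{γ₂}} |γ₁(s) - γ₂(s)|`. -/
def dCurve (γ₁ γ₂ : Curve) : ℝ :=
  |γ₁.T - γ₂.T| + ⨆ s : Icc (0 : ℝ) (max γ₁.T γ₂.T), dist (γ₁.f s) (γ₂.f s)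

/-- The occupation measure `ν_γ(A) = ∫₀^{t_γ} 1{γ(s) ∈ A} ds`. -/
def occ (γ : Curve) : Measure ℂ :=
  Measure.map γ.f (volume.restrict (Icc 0 γ.T))

/-- `φ` is an increasing homeomorphism from `[0,a]` onto `[0,b]`. -/
def IsRepar (a b : ℝ) (φ : ℝ → ℝ) : Prop :=
  ContinuousOn φ (Icc 0 a) ∧ StrictMonoOn φ (Icc 0 a) ∧ φ 0 = 0 ∧ φ a = b ∧
    φ '' Icc 0 a = Icc 0 b

/-- `ρ(γ₁,γ₂) = inf_φ sup_{0 ≤ s ≤ t_{γ₁}} |γ₁(s) - γ₂(φ(s))|`, infimum over increasing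
homeomorphisms `φ : [0,t_{γ₁}] → [0,t_{γ₂}]`. -/
def rho (γ₁ γ₂ : Curve) : ℝ :=
  sInf {r : ℝ | 0 ≤ r ∧ ∃ φ, IsRepar γ₁.T γ₂.T φ ∧
    ∀ s ∈ Icc (0 : ℝ) γ₁.T, dist (γ₁.f s) (γ₂.f (φ s)) ≤ r}

/-- The Lévy–Prokhorov distance between finite Borel measures on `ℂ`; here `A^ε` is the set of
points within distance `ε` of `A`, i.e. `Metric.cthickening ε A`. -/
def dLP (μ ν : Measure ℂ) : ℝ :=
  sInf {ε : ℝ | 0 < ε ∧ ∀ A : Set ℂ, MeasurableSet A →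
    μ A ≤ ν (cthickening ε A) + ENNReal.ofReal ε ∧
    ν A ≤ μ (cthickening ε A) + ENNReal.ofReal ε}

/-- The right-continuous inverse `Θ⁻¹(t) = inf {s ∈ [0,a] : Θ(s) > t}` (with value `a` when the
set is empty). -/
def rcInv (Θ : ℝ → ℝ) (a t : ℝ) : ℝ :=
  sInf ({s | s ∈ Icc 0 a ∧ t < Θ s} ∪ {a})

/-- `Θ_η(s) = μ(η[0,s])`. -/
def Theta (η : ℝ → ℂ) (μ : Measure ℂ) (s : ℝ) : ℝ :=
  (μ (η '' Icc 0 s)).toReal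


/-- The piecewise-linear reparametrization: identity on `[0,c]`, then linear from `(c,c)` to
`(a,b)`. -/
lemma isRepar_piecewise (a b c : ℝ) (h0c : 0 ≤ c) (hca : c < a) (hcb : c < b) :
    IsRepar a b (fun s => if s ≤ c then s else c + (s - c) * ((b - c) / (a - c))) := by
  set k : ℝ := (b - c) / (a - c) with hkdef
  have hk : 0 < k := div_pos (by linarith) (by linarith)
  have hmono : StrictMono (fun s => if s ≤ c then s else c + (s - c) * k) := by
    intro x y hxy
    simp only
    split_ifs with h1 h2 h2
    · exact hxy
    · nlinarith [mul_pos (by linarith [not_le.mp h2] : (0:ℝ) < y - c) hk]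
    · linarith [not_le.mp h1]
    · nlinarith [mul_lt_mul_of_pos_right (sub_lt_sub_right hxy c) hk]
  have hcont : Continuous (fun s => if s ≤ c then s else c + (s - c) * k) := by
    apply Continuous.if_le continuous_id (by continuity) continuous_id continuous_const
    intro x hx
    simp only [id_eq] at hx ⊢
    rw [hx]; ring
  have hφ0 : (fun s => if s ≤ c then s else c + (s - c) * k) 0 = 0 := if_pos h0c
  have hφa : (fun s => if s ≤ c then s else c + (s - c) * k) a = b := by
    have hne : a - c ≠ 0 := ne_of_gt (by linarith)
    simp only [if_neg (not_le.mpr hca), hkdef]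
    field_simp
    ring
  refine ⟨hcont.continuousOn, hmono.strictMonoOn _, hφ0, hφa, ?_⟩
  apply Set.Subset.antisymm
  · rintro _ ⟨s, hs, rfl⟩
    exact ⟨hφ0 ▸ hmono.monotone hs.1, hφa ▸ hmono.monotone hs.2⟩
  · have h := intermediate_value_Icc (le_trans h0c hca.le) hcont.continuousOn
    rwa [show (if (0:ℝ) ≤ c then (0:ℝ) else c + (0 - c) * k) = 0 from hφ0,
      show (if a ≤ c then a else c + (a - c) * k) = b from hφa] at h

lemma occ_le (γ₁ γ₂ : Curve) (ε : ℝ) (hε : 0 ≤ ε)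
    (hd : ∀ s ∈ Icc (0 : ℝ) (max γ₁.T γ₂.T), dist (γ₁.f s) (γ₂.f s) ≤ ε)
    (hT : |γ₁.T - γ₂.T| ≤ ε) (A : Set ℂ) (hA : MeasurableSet A) :
    occ γ₁ A ≤ occ γ₂ (cthickening ε A) + ENNReal.ofReal ε := by
  have hA' : MeasurableSet (cthickening ε A) := (isClosed_cthickening).measurableSet
  have h1 : occ γ₁ A = volume ((γ₁.f ⁻¹' A) ∩ Icc 0 γ₁.T) := by
    rw [occ, Measure.map_apply γ₁.cont.measurable hA,
      Measure.restrict_apply (γ₁.cont.measurable hA)]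
  have h2 : occ γ₂ (cthickening ε A) =
      volume ((γ₂.f ⁻¹' (cthickening ε A)) ∩ Icc 0 γ₂.T) := by
    rw [occ, Measure.map_apply γ₂.cont.measurable hA',
      Measure.restrict_apply (γ₂.cont.measurable hA')]
  have hincl : (γ₁.f ⁻¹' A) ∩ Icc 0 γ₁.T ⊆
      ((γ₂.f ⁻¹' (cthickening ε A)) ∩ Icc 0 γ₂.T) ∪ Icc (min γ₁.T γ₂.T) γ₁.T := by
    rintro s ⟨hsA, hs0, hs1⟩
    by_cases hs2 : s ≤ γ₂.T
    · left
      refine ⟨?_, hs0, hs2⟩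
      exact mem_cthickening_of_dist_le _ _ _ _ hsA
        (by rw [dist_comm]; exact hd s ⟨hs0, le_max_of_le_left hs1⟩)
    · right
      exact ⟨(min_le_right _ _).trans (le_of_not_ge hs2), hs1⟩
  calc occ γ₁ A = volume ((γ₁.f ⁻¹' A) ∩ Icc 0 γ₁.T) := h1
    _ ≤ volume ((((γ₂.f ⁻¹' (cthickening ε A)) ∩ Icc 0 γ₂.T)) ∪ Icc (min γ₁.T γ₂.T) γ₁.T) :=
        measure_mono hincl
    _ ≤ volume ((γ₂.f ⁻¹' (cthickening ε A)) ∩ Icc 0 γ₂.T) +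
        volume (Icc (min γ₁.T γ₂.T) γ₁.T) := measure_union_le _ _
    _ ≤ occ γ₂ (cthickening ε A) + ENNReal.ofReal ε := by
        rw [h2, Real.volume_Icc]
        refine add_le_add le_rfl (ENNReal.ofReal_le_ofReal ?_)
        rcases le_total γ₁.T γ₂.T with h | h
        · rw [min_eq_left h]; linarith
        · rw [min_eq_right h]
          calc γ₁.T - γ₂.T ≤ |γ₁.T - γ₂.T| := le_abs_self _
            _ ≤ ε := hT

lemma dLP_le_of (γ₁ γ₂ : Curve) (M : ℝ) (hM0 : 0 ≤ M)
    (hM : ∀ s ∈ Icc (0 : ℝ) (max γ₁.T γ₂.T), dist (γ₁.f s) (γ₂.f s) ≤ M) :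
    dLP (occ γ₁) (occ γ₂) ≤ |γ₁.T - γ₂.T| + M := by
  apply le_of_forall_pos_le_add
  intro δ hδ
  have habs : (0 : ℝ) ≤ |γ₁.T - γ₂.T| := abs_nonneg _
  set ε := |γ₁.T - γ₂.T| + M + δ with hεdef
  have hε0 : 0 ≤ ε := by linarith
  have hεpos : 0 < ε := by linarith
  have hd : ∀ s ∈ Icc (0 : ℝ) (max γ₁.T γ₂.T), dist (γ₁.f s) (γ₂.f s) ≤ ε :=
    fun s hs => le_trans (hM s hs) (by linarith)
  have hd' : ∀ s ∈ Icc (0 : ℝ) (max γ₂.T γ₁.T), dist (γ₂.f s) (γ₁.f s) ≤ ε := by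
    intro s hs
    rw [dist_comm]
    exact hd s (by rwa [max_comm])
  have hT : |γ₁.T - γ₂.T| ≤ ε := by linarith
  have hT' : |γ₂.T - γ₁.T| ≤ ε := by rw [abs_sub_comm]; exact hT
  have hmem : ε ∈ {ε : ℝ | 0 < ε ∧ ∀ A : Set ℂ, MeasurableSet A →
      occ γ₁ A ≤ occ γ₂ (cthickening ε A) + ENNReal.ofReal ε ∧
      occ γ₂ A ≤ occ γ₁ (cthickening ε A) + ENNReal.ofReal ε} :=
    ⟨hεpos, fun A hA => ⟨occ_le γ₁ γ₂ ε hε0 hd hT A hA, occ_le γ₂ γ₁ ε hε0 hd' hT' A hA⟩⟩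
  exact csInf_le ⟨0, fun x hx => hx.1.le⟩ hmem

lemma rho_le_of (γ₁ γ₂ : Curve) (M : ℝ) (hM0 : 0 ≤ M)
    (hM : ∀ s ∈ Icc (0 : ℝ) (max γ₁.T γ₂.T), dist (γ₁.f s) (γ₂.f s) ≤ M) :
    rho γ₁ γ₂ ≤ M := by
  have hbdd : BddBelow {r : ℝ | 0 ≤ r ∧ ∃ φ, IsRepar γ₁.T γ₂.T φ ∧
      ∀ s ∈ Icc (0 : ℝ) γ₁.T, dist (γ₁.f s) (γ₂.f (φ s)) ≤ r} := ⟨0, fun r hr => hr.1⟩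
  rcases eq_or_lt_of_le (le_min γ₁.hT γ₂.hT) with hmin | hmin
  · rcases eq_or_ne γ₁.T γ₂.T with heq | hne
    · -- equal lifetimes: identity reparametrization
      have hmem : M ∈ {r : ℝ | 0 ≤ r ∧ ∃ φ, IsRepar γ₁.T γ₂.T φ ∧
          ∀ s ∈ Icc (0 : ℝ) γ₁.T, dist (γ₁.f s) (γ₂.f (φ s)) ≤ r} := by
        refine ⟨hM0, id, ⟨continuousOn_id, fun x _ y _ h => h, rfl, heq, by
          rw [Set.image_id, heq]⟩, fun s hs => hM s ⟨hs.1, le_max_of_le_left hs.2⟩⟩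
      exact csInf_le hbdd hmem
    · -- one lifetime is zero, the other positive: no reparametrization exists
      have hempty : {r : ℝ | 0 ≤ r ∧ ∃ φ, IsRepar γ₁.T γ₂.T φ ∧
          ∀ s ∈ Icc (0 : ℝ) γ₁.T, dist (γ₁.f s) (γ₂.f (φ s)) ≤ r} = ∅ := by
        rw [Set.eq_empty_iff_forall_notMem]
        rintro r ⟨hr0, φ, ⟨hφc, hφm, hφ0, hφa, hφi⟩, hφb⟩
        rcases le_total γ₁.T γ₂.T with h | h
        · have h10 : γ₁.T = 0 := (min_eq_left h).symm.trans hmin.symm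
          rw [h10, hφ0] at hφa
          exact hne (h10.trans hφa)
        · have h20 : γ₂.T = 0 := (min_eq_right h).symm.trans hmin.symm
          have h1pos : 0 < γ₁.T := by
            rcases lt_or_eq_of_le γ₁.hT with h' | h'
            · exact h'
            · exact absurd (h'.symm.trans h20.symm) hne
          have hlt := hφm ⟨le_refl 0, γ₁.hT⟩ ⟨γ₁.hT, le_refl _⟩ h1pos
          rw [hφ0, hφa, h20] at hlt
          exact lt_irrefl 0 hlt
      rw [rho, hempty, Real.sInf_empty]
      exact hM0
  · -- both lifetimes positive: piecewise linear reparametrization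
    have hm1 : 0 < γ₁.T := lt_of_lt_of_le hmin (min_le_left _ _)
    have hm2 : 0 < γ₂.T := lt_of_lt_of_le hmin (min_le_right _ _)
    apply le_of_forall_pos_le_add
    intro ε hε
    rcases le_total γ₁.T γ₂.T with hle | hle
    · -- case T₁ ≤ T₂ : use continuity of γ₁ at T₁
      obtain ⟨δ₀, hδ₀, hδ⟩ := Metric.continuousAt_iff.mp (γ₁.cont.continuousAt (x := γ₁.T))
        (ε / 2) (by linarith)
      set c : ℝ := γ₁.T - min (δ₀ / 2) γ₁.T with hcdef
      have hδm : 0 < min (δ₀ / 2) γ₁.T := lt_min (by linarith) hm1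
      have h0c : 0 ≤ c := by
        have := min_le_right (δ₀ / 2) γ₁.T; simp only [hcdef]; linarith
      have hca : c < γ₁.T := by simp only [hcdef]; linarith
      have hcb : c < γ₂.T := lt_of_lt_of_le hca hle
      have hnear : ∀ x ∈ Icc c γ₁.T, dist (γ₁.f x) (γ₁.f γ₁.T) ≤ ε / 2 := by
        intro x hx
        apply le_of_lt
        apply hδ
        rw [Real.dist_eq, abs_of_nonpos (by linarith [hx.2])]
        have := min_le_left (δ₀ / 2) γ₁.T
        simp only [hcdef] at hx
        linarith [hx.1]
      obtain ⟨hφc, hφm, hφ0, hφa, hφi⟩ := isRepar_piecewise γ₁.T γ₂.T c h0c hca hcb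
      set k : ℝ := (γ₂.T - c) / (γ₁.T - c) with hkdef
      have hk : 0 ≤ k := div_nonneg (by linarith) (by linarith)
      have hmem : M + ε ∈ {r : ℝ | 0 ≤ r ∧ ∃ φ, IsRepar γ₁.T γ₂.T φ ∧
          ∀ s ∈ Icc (0 : ℝ) γ₁.T, dist (γ₁.f s) (γ₂.f (φ s)) ≤ r} := by
        refine ⟨by linarith, _, ⟨hφc, hφm, hφ0, hφa, hφi⟩, ?_⟩
        intro s hs
        rcases le_or_gt s c with hsc | hsc
        · rw [if_pos hsc]
          have := hM s ⟨hs.1, le_max_of_le_left hs.2⟩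
          linarith
        · rw [if_neg (not_le.mpr hsc)]
          set u : ℝ := c + (s - c) * k with hudef
          have hu_ge : c ≤ u := by
            have : 0 ≤ (s - c) * k := mul_nonneg (by linarith) hk
            simp only [hudef]; linarith
          have hu_le : u ≤ γ₂.T := by
            have hne : γ₁.T - c ≠ 0 := ne_of_gt (by linarith)
            have heq : (γ₁.T - c) * k = γ₂.T - c := by
              rw [hkdef]; field_simp
            have := mul_le_mul_of_nonneg_right (by linarith [hs.2] : s - c ≤ γ₁.T - c) hk
            simp only [hudef]; linarith
          have h1 : dist (γ₁.f s) (γ₁.f γ₁.T) ≤ ε / 2 := hnear s ⟨hsc.le, hs.2⟩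
          have h2 : dist (γ₁.f γ₁.T) (γ₁.f u) ≤ ε / 2 := by
            rcases le_total u γ₁.T with h | h
            · rw [dist_comm]; exact hnear u ⟨hu_ge, h⟩
            · rw [γ₁.frozen u h, dist_self]; linarith
          have h3 : dist (γ₁.f u) (γ₂.f u) ≤ M :=
            hM u ⟨by linarith, le_max_of_le_right hu_le⟩
          calc dist (γ₁.f s) (γ₂.f u) ≤
              dist (γ₁.f s) (γ₁.f γ₁.T) + dist (γ₁.f γ₁.T) (γ₁.f u) + dist (γ₁.f u) (γ₂.f u) :=
                dist_triangle4 _ _ _ _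
            _ ≤ M + ε := by linarith
      exact csInf_le hbdd hmem
    · -- case T₂ ≤ T₁ : use continuity of γ₂ at T₂
      obtain ⟨δ₀, hδ₀, hδ⟩ := Metric.continuousAt_iff.mp (γ₂.cont.continuousAt (x := γ₂.T))
        (ε / 2) (by linarith)
      set c : ℝ := γ₂.T - min (δ₀ / 2) γ₂.T with hcdef
      have hδm : 0 < min (δ₀ / 2) γ₂.T := lt_min (by linarith) hm2
      have h0c : 0 ≤ c := by
        have := min_le_right (δ₀ / 2) γ₂.T; simp only [hcdef]; linarith
      have hcb : c < γ₂.T := by simp only [hcdef]; linarith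
      have hca : c < γ₁.T := lt_of_lt_of_le hcb hle
      have hnear : ∀ x ∈ Icc c γ₂.T, dist (γ₂.f x) (γ₂.f γ₂.T) ≤ ε / 2 := by
        intro x hx
        apply le_of_lt
        apply hδ
        rw [Real.dist_eq, abs_of_nonpos (by linarith [hx.2])]
        have := min_le_left (δ₀ / 2) γ₂.T
        simp only [hcdef] at hx
        linarith [hx.1]
      obtain ⟨hφc, hφm, hφ0, hφa, hφi⟩ := isRepar_piecewise γ₁.T γ₂.T c h0c hca hcb
      set k : ℝ := (γ₂.T - c) / (γ₁.T - c) with hkdef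
      have hk : 0 ≤ k := div_nonneg (by linarith) (by linarith)
      have hmem : M + ε ∈ {r : ℝ | 0 ≤ r ∧ ∃ φ, IsRepar γ₁.T γ₂.T φ ∧
          ∀ s ∈ Icc (0 : ℝ) γ₁.T, dist (γ₁.f s) (γ₂.f (φ s)) ≤ r} := by
        refine ⟨by linarith, _, ⟨hφc, hφm, hφ0, hφa, hφi⟩, ?_⟩
        intro s hs
        rcases le_or_gt s c with hsc | hsc
        · rw [if_pos hsc]
          have := hM s ⟨hs.1, le_max_of_le_left hs.2⟩
          linarith
        · rw [if_neg (not_le.mpr hsc)]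
          set u : ℝ := c + (s - c) * k with hudef
          have hu_ge : c ≤ u := by
            have : 0 ≤ (s - c) * k := mul_nonneg (by linarith) hk
            simp only [hudef]; linarith
          have hu_le : u ≤ γ₂.T := by
            have hne : γ₁.T - c ≠ 0 := ne_of_gt (by linarith)
            have heq : (γ₁.T - c) * k = γ₂.T - c := by
              rw [hkdef]; field_simp
            have := mul_le_mul_of_nonneg_right (by linarith [hs.2] : s - c ≤ γ₁.T - c) hk
            simp only [hudef]; linarith
          have h1 : dist (γ₁.f s) (γ₂.f s) ≤ M := hM s ⟨hs.1, le_max_of_le_left hs.2⟩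
          have h2 : dist (γ₂.f s) (γ₂.f γ₂.T) ≤ ε / 2 := by
            rcases le_total s γ₂.T with h | h
            · exact hnear s ⟨hsc.le, h⟩
            · rw [γ₂.frozen s h, dist_self]; linarith
          have h3 : dist (γ₂.f γ₂.T) (γ₂.f u) ≤ ε / 2 := by
            rw [dist_comm]; exact hnear u ⟨hu_ge, hu_le⟩
          calc dist (γ₁.f s) (γ₂.f u) ≤
              dist (γ₁.f s) (γ₂.f s) + dist (γ₂.f s) (γ₂.f γ₂.T) + dist (γ₂.f γ₂.T) (γ₂.f u) :=
                dist_triangle4 _ _ _ _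
            _ ≤ M + ε := by linarith
      exact csInf_le hbdd hmem

/-- the map `T : γ ↦ (γ̃, ν_γ)` is Lipschitz with constant at most `2`, from the
metric `d` on curves to the sum metric `ρ + d_LP` on the product space. -/
theorem statement0 (γ₁ γ₂ : Curve) :
    rho γ₁ γ₂ + dLP (occ γ₁) (occ γ₂) ≤ 2 * dCurve γ₁ γ₂ := by
  have hbdd : BddAbove (Set.range fun s : Icc (0 : ℝ) (max γ₁.T γ₂.T) =>
      dist (γ₁.f s) (γ₂.f s)) := by
    rw [← Set.image_eq_range (fun s => dist (γ₁.f s) (γ₂.f s)) (Icc (0 : ℝ) (max γ₁.T γ₂.T))]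
    exact (isCompact_Icc.image (γ₁.cont.dist γ₂.cont)).bddAbove
  set M : ℝ := ⨆ s : Icc (0 : ℝ) (max γ₁.T γ₂.T), dist (γ₁.f s) (γ₂.f s) with hMdef
  have hM : ∀ s ∈ Icc (0 : ℝ) (max γ₁.T γ₂.T), dist (γ₁.f s) (γ₂.f s) ≤ M :=
    fun s hs => le_ciSup hbdd ⟨s, hs⟩
  have hM0 : 0 ≤ M := le_trans dist_nonneg (hM 0 ⟨le_refl 0, le_max_of_le_left γ₁.hT⟩)
  have h1 := rho_le_of γ₁ γ₂ M hM0 hM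
  have h2 := dLP_le_of γ₁ γ₂ M hM0 hM
  have hd : dCurve γ₁ γ₂ = |γ₁.T - γ₂.T| + M := by rw [dCurve, ← hMdef]
  rw [hd]
  linarith [abs_nonneg (γ₁.T - γ₂.T)]
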